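/- arXiv:1205.6510 — 2 statements merged into one kernel-verified Lean document; each statement's English description precedes it below -/
import Mathlib

section
/- Let G be a finite simple graph, H a finite looped-simple graph with vertex set {1,…,k}, and W a kernel. Define the kernel W^H on ([0,1]^k)² by W^H((x₁,…,x_k),(y₁,…,y_k)) = ∏_{(i,j) ∈ E(H)} W(x_i, y_j), where every non-loop edge of H contributes two factors to the product (once as (i,j) and once as (j,i)). Then t(G × H, W) = t(G, W^H), where G × H is the categorical product. -/
open MeasureTheory

noncomputable section

/-- The unit interval `[0,1]` as a measure space. -/
abbrev UI : Type := Set.Icc (0:ℝ) 1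

/-- A kernel is a symmetric bounded measurable function `[0,1]² → ℝ`. -/
def IsKernel (W : UI → UI → ℝ) : Prop :=
  Measurable (Function.uncurry W) ∧ (∀ x y, W x y = W y x) ∧ ∃ C : ℝ, ∀ x y, |W x y| ≤ C

open scoped Classical in
/-- The homomorphism density of `G` in a kernel over an arbitrary measure space `X`:
`t(G,W) = ∫_{X^V} ∏_{(a,b)∈E} W(p(a),p(b)) dp`. -/
noncomputable def homDensityOn {V : Type} [Fintype V] (G : SimpleGraph V) {X : Type}
    [MeasureSpace X] (W : X → X → ℝ) : ℝ :=
  ∫ p : V → X, ∏ e ∈ G.edgeFinset, W (p (Quot.out e).1) (p (Quot.out e).2)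

/-- The categorical product of a simple graph `G` with a looped-simple graph given by a
symmetric relation `R`. -/
def catProd {V₁ V₂ : Type} (G : SimpleGraph V₁) (R : V₂ → V₂ → Prop) (hR : Symmetric R) :
    SimpleGraph (V₁ × V₂) where
  Adj a b := G.Adj a.1 b.1 ∧ R a.2 b.2
  symm := ⟨fun _ _ hab => ⟨G.adj_symm hab.1, hR hab.2⟩⟩
  loopless := ⟨fun a ha => G.irrefl ha.1⟩


/-- Currying as a measurable equivalence. -/
def curryMEquiv (ι κ X : Type) [MeasurableSpace X] : ((ι × κ) → X) ≃ᵐ (ι → κ → X) where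
  toFun p a i := p (a, i)
  invFun q x := q x.1 x.2
  left_inv p := rfl
  right_inv q := rfl
  measurable_toFun := by
    apply measurable_pi_iff.mpr; intro a
    apply measurable_pi_iff.mpr; intro i
    exact measurable_pi_apply _
  measurable_invFun := by
    apply measurable_pi_iff.mpr; intro x
    exact (measurable_pi_apply x.2).comp (measurable_pi_apply x.1)

lemma curryMEquiv_mp (ι κ X : Type) [Fintype ι] [Fintype κ] [MeasureSpace X]
    [SigmaFinite (volume : Measure X)] :
    MeasurePreserving (curryMEquiv ι κ X) volume volume := by
  have h : MeasurePreserving (curryMEquiv ι κ X).symm volume volume := by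
    constructor
    · exact (curryMEquiv ι κ X).symm.measurable
    · refine (Measure.pi_eq fun s hs => ?_).symm
      rw [Measure.map_apply (curryMEquiv ι κ X).symm.measurable (MeasurableSet.univ_pi hs)]
      have : (curryMEquiv ι κ X).symm ⁻¹' (Set.univ.pi s)
          = Set.univ.pi (fun a => Set.univ.pi (fun i => s (a, i))) := by
        ext q
        simp [curryMEquiv, Set.mem_pi, Prod.forall]
      rw [this]
      simp only [volume_pi, Measure.pi_pi]
      rw [Fintype.prod_prod_type]
  simpa using h.symm (curryMEquiv ι κ X).symm


open scoped Classical in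
lemma adj_of_mem_edgeFinset {V : Type} [Fintype V] {G : SimpleGraph V} [Fintype G.edgeSet]
    {e : Sym2 V} (he : e ∈ G.edgeFinset) : G.Adj (Quot.out e).1 (Quot.out e).2 := by
  rw [SimpleGraph.mem_edgeFinset, ← Quot.out_eq e] at he
  exact he

open scoped Classical in
lemma prod_edges_catProd {V₁ : Type} [Fintype V₁] (G : SimpleGraph V₁) (k : ℕ)
    (R : Fin k → Fin k → Prop) (hR : Symmetric R)
    (W : UI → UI → ℝ) (hWs : ∀ x y, W x y = W y x)
    (p : (V₁ × Fin k) → UI) :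
    ∏ e ∈ (catProd G R hR).edgeFinset, W (p (Quot.out e).1) (p (Quot.out e).2)
      = ∏ e ∈ G.edgeFinset, ∏ q ∈ Finset.univ.filter (fun q : Fin k × Fin k => R q.1 q.2),
          W (p ((Quot.out e).1, q.1)) (p ((Quot.out e).2, q.2)) := by
  classical
  have key : ∏ e ∈ (catProd G R hR).edgeFinset, W (p (Quot.out e).1) (p (Quot.out e).2)
      = ∏ x ∈ G.edgeFinset ×ˢ (Finset.univ.filter (fun q : Fin k × Fin k => R q.1 q.2)),
          W (p ((Quot.out x.1).1, x.2.1)) (p ((Quot.out x.1).2, x.2.2)) := by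
    refine (Finset.prod_bij
      (fun x _ => s(((Quot.out x.1).1, x.2.1), ((Quot.out x.1).2, x.2.2))) ?_ ?_ ?_ ?_).symm
    · rintro ⟨e, i, j⟩ hx
      simp only [Finset.mem_product, Finset.mem_filter, Finset.mem_univ, true_and] at hx
      have hadj := adj_of_mem_edgeFinset hx.1
      simp only [SimpleGraph.mem_edgeFinset, SimpleGraph.mem_edgeSet]
      exact ⟨hadj, hx.2⟩
    · rintro ⟨e, i, j⟩ hx ⟨e', i', j'⟩ hx' heq
      simp only [Finset.mem_product, Finset.mem_filter, Finset.mem_univ, true_and] at hx hx'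
      have hadj := adj_of_mem_edgeFinset hx.1
      have hadj' := adj_of_mem_edgeFinset hx'.1
      rw [Sym2.eq_iff] at heq
      rcases heq with ⟨h1, h2⟩ | ⟨h1, h2⟩
      · injection h1 with ha hi
        injection h2 with hb hj
        have he : e = e' := by
          rw [← Quot.out_eq e, ← Quot.out_eq e',
            show Quot.out e = Quot.out e' from Prod.ext ha hb]
        simp only [Prod.mk.injEq]
        exact ⟨he, hi, hj⟩
      · exfalso
        injection h1 with ha hi
        injection h2 with hb hj
        have hee' : e = e' := by
          rw [← Quot.out_eq e, ← Quot.out_eq e', Sym2.eq_iff]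
          right
          exact ⟨ha, hb⟩
        rw [hee'] at ha
        exact hadj'.ne ha
    · intro b hb
      obtain ⟨hGadj, hRadj⟩ := adj_of_mem_edgeFinset hb
      set a := (Quot.out b).1.1
      set c := (Quot.out b).2.1
      set i := (Quot.out b).1.2
      set j := (Quot.out b).2.2
      have hmem : s(a, c) ∈ G.edgeFinset := by
        rw [SimpleGraph.mem_edgeFinset, SimpleGraph.mem_edgeSet]; exact hGadj
      have hout : s((Quot.out s(a,c)).1, (Quot.out s(a,c)).2) = s(a,c) := Quot.out_eq _
      rw [Sym2.eq_iff] at hout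
      rcases hout with ⟨h1, h2⟩ | ⟨h1, h2⟩
      · refine ⟨(s(a,c), (i, j)), ?_, ?_⟩
        · simp only [Finset.mem_product, Finset.mem_filter, Finset.mem_univ, true_and]
          exact ⟨hmem, hRadj⟩
        · rw [← Quot.out_eq b]
          simp only [h1, h2]
          rfl
      · refine ⟨(s(a,c), (j, i)), ?_, ?_⟩
        · simp only [Finset.mem_product, Finset.mem_filter, Finset.mem_univ, true_and]
          exact ⟨hmem, hR hRadj⟩
        · rw [← Quot.out_eq b]
          simp only [h1, h2]
          rw [Sym2.eq_swap]
    · rintro ⟨e, i, j⟩ hx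
      have hout : s((Quot.out s(((Quot.out e).1, i), ((Quot.out e).2, j))).1,
          (Quot.out s(((Quot.out e).1, i), ((Quot.out e).2, j))).2)
          = s(((Quot.out e).1, i), ((Quot.out e).2, j)) := Quot.out_eq _
      rw [Sym2.eq_iff] at hout
      rcases hout with ⟨h1, h2⟩ | ⟨h1, h2⟩
      · rw [h1, h2]
      · rw [h1, h2, hWs]
  rw [key, Finset.prod_product]

open scoped Classical in
/-- `t(G × H, W) = t(G, W^H)`, where `H` is a looped-simple graph on `{1,…,k}` given by a
symmetric relation `R`, and `W^H((x₁,…,x_k),(y₁,…,y_k)) = ∏_{(i,j) ∈ E(H)} W(xᵢ, yⱼ)`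
(each non-loop edge of `H` contributing two factors, once as `(i,j)` and once as `(j,i)`). -/
theorem homDensity_catProd {V₁ : Type} [Fintype V₁] (G : SimpleGraph V₁) (k : ℕ)
    (R : Fin k → Fin k → Prop) (hR : Symmetric R)
    (W : UI → UI → ℝ) (hW : IsKernel W)
    (WH : (Fin k → UI) → (Fin k → UI) → ℝ)
    (hWH : ∀ x y, WH x y =
      ∏ q ∈ Finset.univ.filter (fun q : Fin k × Fin k => R q.1 q.2), W (x q.1) (y q.2)) :
    homDensityOn (catProd G R hR) W = homDensityOn G WH := by
  classical
  unfold homDensityOn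
  rw [← (curryMEquiv_mp V₁ (Fin k) UI).integral_comp
    (curryMEquiv V₁ (Fin k) UI).measurableEmbedding]
  congr 1
  funext p
  simp only [hWH]
  exact prod_edges_catProd G k R hR W hW.2.1 p
end
end

section
/- Let G be a finite simple graph and let G² denote the disjoint union of two copies of G. Then p(G²) = r̄(G²), where p and r̄ are computed with target K_n for any sufficiently large n (say n ≥ 4|V(G)|). -/
open MeasureTheory

noncomputable section

open scoped Classical in
/-- A graph homomorphism `f : G → H` is even if for every edge `e` of `H`, the number of
edges of `G` mapped by `f` onto `e` is even. -/
def IsEvenHom {V V' : Type} [Fintype V] [Fintype V'] {G : SimpleGraph V} {H : SimpleGraph V'}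
    (f : G →g H) : Prop :=
  ∀ e ∈ H.edgeFinset, Even ((G.edgeFinset.filter (fun e' => Sym2.map (⇑f) e' = e)).card)

open scoped Classical in
/-- The set of `f`-odd vertices of `K_n`: those incident with an edge having an odd number
of preimage edges under `f`. -/
noncomputable def oddVerts {V : Type} [Fintype V] {G : SimpleGraph V} {n : ℕ}
    (f : G →g (⊤ : SimpleGraph (Fin n))) : Finset (Fin n) :=
  Finset.univ.filter (fun v => ∃ e ∈ (⊤ : SimpleGraph (Fin n)).edgeFinset,
    Odd ((G.edgeFinset.filter (fun e' => Sym2.map (⇑f) e' = e)).card) ∧ v ∈ e)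

open scoped Classical in
/-- `r(f) = |V(G)| − |f(V(G))| + |V_odd(f)|/2`. -/
noncomputable def rval {V : Type} [Fintype V] {G : SimpleGraph V} {n : ℕ}
    (f : G →g (⊤ : SimpleGraph (Fin n))) : ℝ :=
  (Fintype.card V : ℝ) - ((Finset.univ.image ⇑f).card : ℝ) + ((oddVerts f).card : ℝ) / 2

/-- `r̄(G) = min { r(f) : f : G → K_n }`. -/
noncomputable def rbar {V : Type} [Fintype V] (G : SimpleGraph V) (n : ℕ) : ℝ :=
  sInf {x : ℝ | ∃ f : G →g (⊤ : SimpleGraph (Fin n)), rval f = x}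

open scoped Classical in
/-- `p(G) = min { |V(G)| − |f(V(G))| : f : G → K_n even }`. -/
noncomputable def pval {V : Type} [Fintype V] (G : SimpleGraph V) (n : ℕ) : ℝ :=
  sInf {x : ℝ | ∃ f : G →g (⊤ : SimpleGraph (Fin n)), IsEvenHom f ∧
    (Fintype.card V : ℝ) - ((Finset.univ.image ⇑f).card : ℝ) = x}

/-- The disjoint union of `k` copies of `G`. -/
def copies {V : Type} (G : SimpleGraph V) (k : ℕ) : SimpleGraph (Fin k × V) where
  Adj a b := a.1 = b.1 ∧ G.Adj a.2 b.2
  symm := ⟨fun _ _ hab => ⟨hab.1.symm, G.adj_symm hab.2⟩⟩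
  loopless := ⟨fun a ha => G.irrefl ha.2⟩


section Aux

open Finset

variable {V : Type} [Fintype V]

open scoped Classical in
/-- Number of edges of `G` mapped by the vertex map `F` onto `e`. -/
noncomputable def ecnt {α β : Type} [Fintype α] (G : SimpleGraph α) (F : α → β) (e : Sym2 β) : ℕ :=
  (G.edgeFinset.filter (fun e' => Sym2.map F e' = e)).card

open scoped Classical in
lemma copies_edgeFinset (G : SimpleGraph V) :
    (copies G 2).edgeFinset =
      (G.edgeFinset.image (Sym2.map (Prod.mk (0 : Fin 2)))) ∪
      (G.edgeFinset.image (Sym2.map (Prod.mk (1 : Fin 2)))) := by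
  ext s
  induction s with
  | _ a b =>
    simp only [SimpleGraph.mem_edgeFinset, SimpleGraph.mem_edgeSet, mem_union, mem_image]
    constructor
    · rintro ⟨h1, h2⟩
      obtain ⟨i, u⟩ := a
      obtain ⟨j, v⟩ := b
      dsimp at h1 h2
      subst h1
      fin_cases i
      · exact Or.inl ⟨s(u, v), by simpa [SimpleGraph.mem_edgeFinset] using h2, rfl⟩
      · exact Or.inr ⟨s(u, v), by simpa [SimpleGraph.mem_edgeFinset] using h2, rfl⟩
    · rintro (⟨t, ht, h⟩ | ⟨t, ht, h⟩) <;>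
      · induction t with
        | _ u v =>
          rw [Sym2.map_pair_eq, Sym2.eq_iff] at h
          rcases h with ⟨ha, hb⟩ | ⟨ha, hb⟩ <;>
            first
          | (rw [← ha, ← hb]; exact ⟨rfl, by simpa using ht⟩)
          | (rw [← ha, ← hb]; exact ⟨rfl, by simpa using ht.symm⟩)


lemma prodmk_inj (i : Fin 2) : Function.Injective (Prod.mk i : V → Fin 2 × V) := by
  intro a b h; injection h

open scoped Classical in
lemma split_cnt (G : SimpleGraph V) {n : ℕ} (F : Fin 2 × V → Fin n) (e : Sym2 (Fin n)) :
    ecnt (copies G 2) F e = ecnt G (fun v => F (0, v)) e + ecnt G (fun v => F (1, v)) e := by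
  classical
  have key : ∀ i : Fin 2,
      ((G.edgeFinset.image (Sym2.map (Prod.mk i))).filter (fun e' => Sym2.map F e' = e)).card
        = ecnt G (fun v => F (i, v)) e := by
    intro i
    rw [filter_image, card_image_of_injective _ (Sym2.map.injective (prodmk_inj _))]
    unfold ecnt
    congr 1
    ext t
    simp only [mem_filter, Sym2.map_map]
    exact Iff.rfl
  unfold ecnt
  rw [copies_edgeFinset, filter_union, card_union_of_disjoint ?hd]
  · congr 1
    · exact (congrArg Finset.card (filter_congr_decidable _ _ _)).trans (key 0)
    · exact (congrArg Finset.card (filter_congr_decidable _ _ _)).trans (key 1)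
  case hd =>
    rw [disjoint_left]
    intro s h0 h1
    simp only [Finset.mem_filter, Finset.mem_image] at h0 h1
    obtain ⟨⟨t0, -, ht0⟩, -⟩ := h0
    obtain ⟨⟨t1, -, ht1⟩, -⟩ := h1
    rw [← ht1] at ht0
    induction t0 with
    | _ a b =>
      induction t1 with
      | _ c d =>
        rw [Sym2.map_pair_eq, Sym2.map_pair_eq, Sym2.eq_iff] at ht0
        rcases ht0 with ⟨h, -⟩ | ⟨h, -⟩ <;> exact Fin.zero_ne_one (congrArg Prod.fst h)

open scoped Classical in
lemma image_split {n : ℕ} (F : Fin 2 × V → Fin n) :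
    (Finset.univ.image F) =
      (Finset.univ.image (fun v => F (0, v))) ∪ (Finset.univ.image (fun v => F (1, v))) := by
  ext x
  simp only [mem_image, mem_union, mem_univ, true_and]
  constructor
  · rintro ⟨⟨i, v⟩, -, rfl⟩
    fin_cases i
    · exact Or.inl ⟨v, rfl⟩
    · exact Or.inr ⟨v, rfl⟩
  · rintro (⟨v, rfl⟩ | ⟨v, rfl⟩)
    · exact ⟨(0, v), rfl⟩
    · exact ⟨(1, v), rfl⟩


open scoped Classical in
lemma ecnt_spec {α β : Type} [Fintype α] (G : SimpleGraph α) (F : α → β) (e : Sym2 β)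
    {p : Sym2 α → Prop} [DecidablePred p] (hp : ∀ t, p t ↔ Sym2.map F t = e) :
    ecnt G F e = (G.edgeFinset.filter p).card := by
  unfold ecnt
  congr 1
  ext t
  simp only [mem_filter, hp]

open scoped Classical in
/-- Odd vertices of a single vertex map. -/
noncomputable def sodd {α : Type} [Fintype α] (G : SimpleGraph α) {n : ℕ} (F : α → Fin n) : Finset (Fin n) :=
  Finset.univ.filter (fun v => ∃ e ∈ (⊤ : SimpleGraph (Fin n)).edgeFinset,
    Odd (ecnt G F e) ∧ v ∈ e)

open scoped Classical in
lemma mem_sodd {α : Type} [Fintype α] {G : SimpleGraph α} {n : ℕ} {F : α → Fin n} {v : Fin n} :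
    v ∈ sodd G F ↔ ∃ e ∈ (⊤ : SimpleGraph (Fin n)).edgeFinset, Odd (ecnt G F e) ∧ v ∈ e := by
  unfold sodd
  simp [mem_filter]

lemma sodd_subset_image {α : Type} [Fintype α] (G : SimpleGraph α) {n : ℕ} (F : α → Fin n) :
    sodd G F ⊆ Finset.univ.image F := by
  intro v hv
  obtain ⟨e, -, hodd, hve⟩ := mem_sodd.mp hv
  have hpos : ecnt G F e ≠ 0 := by
    intro h0
    rw [h0] at hodd
    simp at hodd
  unfold ecnt at hpos
  rw [Finset.card_ne_zero] at hpos
  obtain ⟨t, ht⟩ := hpos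
  simp only [Finset.mem_filter] at ht
  obtain ⟨-, htmap⟩ := ht
  rw [← htmap] at hve
  rw [Sym2.mem_map] at hve
  obtain ⟨u, -, rfl⟩ := hve
  exact Finset.mem_image.mpr ⟨u, Finset.mem_univ _, rfl⟩

/-- Restriction of a homomorphism of `G²` to one copy. -/
def restrHom (G : SimpleGraph V) {n : ℕ} (F : (copies G 2) →g (⊤ : SimpleGraph (Fin n)))
    (i : Fin 2) : G →g (⊤ : SimpleGraph (Fin n)) where
  toFun := fun v => F (i, v)
  map_rel' := fun hab => F.map_rel' ⟨rfl, hab⟩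

open scoped Classical in
lemma oddVerts_eq_sodd {α : Type} [Fintype α] {G : SimpleGraph α} {n : ℕ}
    (F : G →g (⊤ : SimpleGraph (Fin n))) :
    oddVerts F = sodd G ⇑F := by
  unfold oddVerts sodd
  congr 1
  ext v
  have : ∀ e : Sym2 (Fin n),
      Odd ((G.edgeFinset.filter (fun e' => Sym2.map (⇑F) e' = e)).card)
        ↔ Odd (ecnt G ⇑F e) := by
    intro e
    rw [ecnt_spec G ⇑F e (p := fun e' => Sym2.map (⇑F) e' = e) (fun t => Iff.rfl)]
  constructor
  · rintro ⟨e, he, hodd, hve⟩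
    exact ⟨e, he, (this e).mp hodd, hve⟩
  · rintro ⟨e, he, hodd, hve⟩
    exact ⟨e, he, (this e).mpr hodd, hve⟩

open scoped Classical in
lemma main_ineq (G : SimpleGraph V) {n : ℕ} (F : (copies G 2) →g (⊤ : SimpleGraph (Fin n))) :
    2 * (Finset.univ.image ⇑F).card
      + (sodd G (fun v => F (0, v))).card + (sodd G (fun v => F (1, v))).card
    ≤ 2 * (Finset.univ.image (fun v => F (0, v))).card
      + 2 * (Finset.univ.image (fun v => F (1, v))).card + (oddVerts F).card := by
  classical
  have himg := image_split (⇑F)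
  have h1 : (Finset.univ.image ⇑F).card
        + ((Finset.univ.image (fun v => F (0, v))) ∩ (Finset.univ.image (fun v => F (1, v)))).card
      = (Finset.univ.image (fun v => F (0, v))).card
        + (Finset.univ.image (fun v => F (1, v))).card := by
    rw [himg]
    exact card_union_add_card_inter _ _
  set S1 := sodd G (fun v => F (0, v)) with hS1
  set S2 := sodd G (fun v => F (1, v)) with hS2
  have hcross : ∀ v, v ∈ S1 → v ∈ S2 ∨ v ∈ oddVerts F := by
    intro v hv1
    by_cases hv2 : v ∈ S2
    · exact Or.inl hv2
    · refine Or.inr ?_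
      obtain ⟨e, he, hodd, hve⟩ := mem_sodd.mp hv1
      have heven2 : ¬ Odd (ecnt G (fun v => F (1, v)) e) := by
        intro hodd2
        exact hv2 (mem_sodd.mpr ⟨e, he, hodd2, hve⟩)
      rw [Nat.not_odd_iff_even] at heven2
      rw [oddVerts_eq_sodd]
      refine mem_sodd.mpr ⟨e, he, ?_, hve⟩
      rw [split_cnt G ⇑F e]
      exact hodd.add_even heven2
  have hcross' : ∀ v, v ∈ S2 → v ∈ S1 ∨ v ∈ oddVerts F := by
    intro v hv2
    by_cases hv1 : v ∈ S1
    · exact Or.inl hv1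
    · refine Or.inr ?_
      obtain ⟨e, he, hodd, hve⟩ := mem_sodd.mp hv2
      have heven1 : ¬ Odd (ecnt G (fun v => F (0, v)) e) := by
        intro hodd1
        exact hv1 (mem_sodd.mpr ⟨e, he, hodd1, hve⟩)
      rw [Nat.not_odd_iff_even] at heven1
      rw [oddVerts_eq_sodd]
      refine mem_sodd.mpr ⟨e, he, ?_, hve⟩
      rw [split_cnt G ⇑F e]
      exact heven1.add_odd hodd
  have hsub : S1 ∪ S2 ⊆ (S1 ∩ S2) ∪ oddVerts F := by
    intro v hv
    rcases Finset.mem_union.mp hv with hv1 | hv2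
    · rcases hcross v hv1 with h | h
      · exact Finset.mem_union.mpr (Or.inl (Finset.mem_inter.mpr ⟨hv1, h⟩))
      · exact Finset.mem_union.mpr (Or.inr h)
    · rcases hcross' v hv2 with h | h
      · exact Finset.mem_union.mpr (Or.inl (Finset.mem_inter.mpr ⟨h, hv2⟩))
      · exact Finset.mem_union.mpr (Or.inr h)
  have h2 : (S1 ∪ S2).card ≤ (S1 ∩ S2).card + (oddVerts F).card :=
    le_trans (Finset.card_le_card hsub) (Finset.card_union_le _ _)
  have h3 : (S1 ∪ S2).card + (S1 ∩ S2).card = S1.card + S2.card :=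
    card_union_add_card_inter _ _
  have h4 : (S1 ∩ S2).card
      ≤ ((Finset.univ.image (fun v => F (0, v))) ∩ (Finset.univ.image (fun v => F (1, v)))).card :=
    Finset.card_le_card (Finset.inter_subset_inter (sodd_subset_image _ _) (sodd_subset_image _ _))
  omega


open scoped Classical in
lemma symmap_injOn {n : ℕ} {σ : Fin n → Fin n} {A : Finset (Fin n)}
    (hinj : ∀ x ∈ A, ∀ y ∈ A, σ x = σ y → x = y)
    {d1 d2 : Sym2 (Fin n)} (h1 : ∀ x ∈ d1, x ∈ A) (h2 : ∀ x ∈ d2, x ∈ A)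
    (heq : Sym2.map σ d1 = Sym2.map σ d2) : d1 = d2 := by
  induction d1 with
  | _ a b =>
    induction d2 with
    | _ c d =>
      rw [Sym2.map_pair_eq, Sym2.map_pair_eq, Sym2.eq_iff] at heq
      have ha := h1 a (Sym2.mem_mk_left a b)
      have hb := h1 b (Sym2.mem_mk_right a b)
      have hc := h2 c (Sym2.mem_mk_left c d)
      have hd := h2 d (Sym2.mem_mk_right c d)
      rw [Sym2.eq_iff]
      rcases heq with ⟨e1, e2⟩ | ⟨e1, e2⟩
      · exact Or.inl ⟨hinj a ha c hc e1, hinj b hb d hd e2⟩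
      · exact Or.inr ⟨hinj a ha d hd e1, hinj b hb c hc e2⟩

open scoped Classical in
lemma ecnt_ne_zero {G : SimpleGraph V} {n : ℕ} {F : V → Fin n} {e : Sym2 (Fin n)}
    (hne : ecnt G F e ≠ 0) : ∃ t ∈ G.edgeFinset, Sym2.map F t = e := by
  unfold ecnt at hne
  rw [Finset.card_ne_zero] at hne
  obtain ⟨t, ht⟩ := hne
  simp only [Finset.mem_filter] at ht
  exact ⟨t, ht.1, ht.2⟩

open scoped Classical in
lemma edge_image_mem {G : SimpleGraph V} {n : ℕ} {h : G →g (⊤ : SimpleGraph (Fin n))}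
    {t : Sym2 V} (ht : t ∈ G.edgeFinset) :
    (∀ x ∈ Sym2.map (⇑h) t, x ∈ Finset.univ.image ⇑h) ∧
      Sym2.map (⇑h) t ∈ (⊤ : SimpleGraph (Fin n)).edgeSet := by
  induction t with
  | _ u v =>
    rw [SimpleGraph.mem_edgeFinset, SimpleGraph.mem_edgeSet] at ht
    constructor
    · intro x hx
      rw [Sym2.map_pair_eq] at hx
      rw [Sym2.mem_iff] at hx
      rcases hx with rfl | rfl
      · exact Finset.mem_image.mpr ⟨u, Finset.mem_univ _, rfl⟩
      · exact Finset.mem_image.mpr ⟨v, Finset.mem_univ _, rfl⟩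
    · rw [Sym2.map_pair_eq, SimpleGraph.mem_edgeSet]
      have := h.map_rel' ht
      simpa using this

open scoped Classical in
lemma construct (G : SimpleGraph V) {n : ℕ} (hn : 2 * Fintype.card V ≤ n)
    (h : G →g (⊤ : SimpleGraph (Fin n))) :
    ∃ g : (copies G 2) →g (⊤ : SimpleGraph (Fin n)), IsEvenHom g ∧
      (Finset.univ.image ⇑g).card + (sodd G ⇑h).card = 2 * (Finset.univ.image ⇑h).card := by
  classical
  set A := Finset.univ.image ⇑h with hA
  set S := sodd G ⇑h with hS
  have hSA : S ⊆ A := sodd_subset_image G ⇑h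
  set T := A \ S with hT
  have hTS : T.card + S.card = A.card := Finset.card_sdiff_add_card_eq_card hSA
  have hAV : A.card ≤ Fintype.card V := by
    calc A.card ≤ Finset.univ.card := Finset.card_image_le
    _ = Fintype.card V := Finset.card_univ
  have hle : T.card ≤ Aᶜ.card := by
    have h1 : Aᶜ.card = n - A.card := by
      rw [Finset.card_compl, Fintype.card_fin]
    have h2 : T.card ≤ A.card := by omega
    omega
  set σ : Fin n → Fin n := fun x =>
    if hx : x ∈ T then (Aᶜ.orderEmbOfFin rfl) (Fin.castLE hle ((T.orderIsoOfFin rfl).symm ⟨x, hx⟩))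
    else x with hσ
  have hσT : ∀ x ∈ T, σ x ∈ Aᶜ := by
    intro x hx
    rw [hσ]
    simp only [dif_pos hx]
    exact Finset.orderEmbOfFin_mem _ _ _
  have hσfix : ∀ x, x ∉ T → σ x = x := by
    intro x hx
    rw [hσ]
    simp only [dif_neg hx]
  have hσS : ∀ x ∈ S, σ x = x := by
    intro x hx
    apply hσfix
    rw [hT]
    simp [hx]
  have hinj : ∀ x ∈ A, ∀ y ∈ A, σ x = σ y → x = y := by
    intro x hxA y hyA hxy
    by_cases hx : x ∈ T <;> by_cases hy : y ∈ T
    · rw [hσ] at hxy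
      simp only [dif_pos hx, dif_pos hy] at hxy
      have h1 := (Aᶜ.orderEmbOfFin rfl).injective hxy
      have h2 := Fin.castLE_injective hle h1
      have h3 := (T.orderIsoOfFin rfl).symm.injective h2
      exact congrArg Subtype.val h3
    · exfalso
      have h1 := hσT x hx
      rw [hσfix y hy] at hxy
      rw [hxy] at h1
      exact (Finset.mem_compl.mp h1) hyA
    · exfalso
      have h1 := hσT y hy
      rw [hσfix x hx] at hxy
      rw [← hxy] at h1
      exact (Finset.mem_compl.mp h1) hxA
    · rw [hσfix x hx, hσfix y hy] at hxy
      exact hxy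
  -- the homomorphism g
  set Fg : Fin 2 × V → Fin n := fun p => if p.1 = 0 then h p.2 else σ (h p.2) with hFg
  have hmemA : ∀ v : V, h v ∈ A := fun v => Finset.mem_image.mpr ⟨v, Finset.mem_univ _, rfl⟩
  have hgadj : ∀ a b : Fin 2 × V, (copies G 2).Adj a b → (⊤ : SimpleGraph (Fin n)).Adj (Fg a) (Fg b) := by
    rintro ⟨i, u⟩ ⟨j, v⟩ ⟨hij, huv⟩
    dsimp only at hij
    subst hij
    have hne : h u ≠ h v := by
      have := h.map_rel' huv
      simpa using this
    rw [SimpleGraph.top_adj, hFg]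
    by_cases hi : i = 0
    · simp only [hi, if_pos rfl]
      exact hne
    · simp only [if_neg hi]
      intro heq
      exact hne (hinj _ (hmemA u) _ (hmemA v) heq)
  set g : (copies G 2) →g (⊤ : SimpleGraph (Fin n)) := ⟨Fg, fun {a b} hab => hgadj a b hab⟩ with hg
  have hgcoe : ⇑g = Fg := rfl
  have h0 : (fun v => Fg (0, v)) = ⇑h := by
    funext v
    simp [hFg]
  have h1 : (fun v => Fg (1, v)) = fun v => σ (h v) := by
    funext v
    simp [hFg]
  have hmapmem : ∀ t : Sym2 V, ∀ x ∈ Sym2.map (⇑h) t, x ∈ A := by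
    intro t
    induction t with
    | _ u v =>
      intro x hx
      rw [Sym2.map_pair_eq, Sym2.mem_iff] at hx
      rcases hx with rfl | rfl
      · exact hmemA u
      · exact hmemA v
  have hKmem : ∀ d : Sym2 (Fin n), d ∈ (⊤ : SimpleGraph (Fin n)).edgeSet →
      d ∈ (⊤ : SimpleGraph (Fin n)).edgeFinset := fun d hd => SimpleGraph.mem_edgeFinset.mpr hd
  have hSmem : ∀ d ∈ (⊤ : SimpleGraph (Fin n)).edgeSet, Odd (ecnt G ⇑h d) → ∀ x ∈ d, x ∈ S := by
    intro d hd hodd x hx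
    exact mem_sodd.mpr ⟨d, hKmem d hd, hodd, hx⟩
  have hfixe : ∀ d ∈ (⊤ : SimpleGraph (Fin n)).edgeSet, Odd (ecnt G ⇑h d) →
      Sym2.map σ d = d := by
    intro d
    induction d with
    | _ a b =>
      intro hd hodd
      rw [Sym2.map_pair_eq, hσS a (hSmem _ hd hodd a (Sym2.mem_mk_left a b)),
        hσS b (hSmem _ hd hodd b (Sym2.mem_mk_right a b))]
  have claimA : ∀ e' ∈ (⊤ : SimpleGraph (Fin n)).edgeSet, Odd (ecnt G ⇑h e') →
      ecnt G (fun v => σ (h v)) e' = ecnt G ⇑h e' := by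
    intro e' he' hodd
    have hfix := hfixe e' he' hodd
    have hSe : ∀ x ∈ e', x ∈ A := fun x hx => hSA (hSmem e' he' hodd x hx)
    unfold ecnt
    congr 1
    ext t
    simp only [Finset.mem_filter]
    constructor
    · rintro ⟨ht, hmap⟩
      refine ⟨ht, ?_⟩
      have hmap' : Sym2.map σ (Sym2.map (⇑h) t) = e' :=
        (Sym2.map_map _).trans hmap
      exact symmap_injOn hinj (hmapmem t) hSe (hmap'.trans hfix.symm)
    · rintro ⟨ht, hmap⟩
      refine ⟨ht, ?_⟩
      show Sym2.map (σ ∘ ⇑h) t = e'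
      rw [← Sym2.map_map, hmap]
      exact hfix
  have claimB : ∀ e', Odd (ecnt G (fun v => σ (h v)) e') →
      ecnt G (fun v => σ (h v)) e' = ecnt G ⇑h e' := by
    intro e' hodd2
    have hne : ecnt G (fun v => σ (h v)) e' ≠ 0 := by
      intro hzero
      rw [hzero] at hodd2
      simp at hodd2
    obtain ⟨t0, ht0, hmap0⟩ := ecnt_ne_zero hne
    have hmap0' : Sym2.map σ (Sym2.map (⇑h) t0) = e' :=
      (Sym2.map_map _).trans hmap0
    set d0 := Sym2.map (⇑h) t0 with hd0
    have hd0A : ∀ x ∈ d0, x ∈ A := hmapmem t0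
    have hcnt : ecnt G (fun v => σ (h v)) e' = ecnt G ⇑h d0 := by
      unfold ecnt
      congr 1
      ext t
      simp only [Finset.mem_filter]
      constructor
      · rintro ⟨ht, hmap⟩
        refine ⟨ht, ?_⟩
        have hmap' : Sym2.map σ (Sym2.map (⇑h) t) = e' :=
          (Sym2.map_map _).trans hmap
        exact symmap_injOn hinj (hmapmem t) hd0A (hmap'.trans hmap0'.symm)
      · rintro ⟨ht, hmap⟩
        refine ⟨ht, ?_⟩
        show Sym2.map (σ ∘ ⇑h) t = e'
        rw [← Sym2.map_map, hmap]
        exact hmap0'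
    have hodd0 : Odd (ecnt G ⇑h d0) := hcnt ▸ hodd2
    have hd0K : d0 ∈ (⊤ : SimpleGraph (Fin n)).edgeSet := (edge_image_mem ht0).2
    have hfix0 : Sym2.map σ d0 = d0 := hfixe d0 hd0K hodd0
    have he'd0 : e' = d0 := hmap0'.symm.trans hfix0
    rw [hcnt, he'd0]
  refine ⟨g, ?_, ?_⟩
  · -- evenness
    unfold IsEvenHom
    intro e he
    simp only [SimpleGraph.mem_edgeFinset] at he
    suffices hsuff : Even (ecnt (copies G 2) ⇑g e) by
      unfold ecnt at hsuff
      convert hsuff using 3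
      try exact (filter_congr_decidable _ _ _).trans (filter_congr_decidable _ _ _).symm
    rw [split_cnt G ⇑g e]
    simp only [hgcoe]
    rw [h0, h1]
    rcases Nat.even_or_odd (ecnt G ⇑h e) with hev | hodd
    · rcases Nat.even_or_odd (ecnt G (fun v => σ (h v)) e) with hev2 | hodd2
      · exact hev.add hev2
      · rw [claimB e hodd2]
        exact Even.add_self _
    · rw [claimA e he hodd]
      exact Even.add_self _
  · -- image computation
    have himg : Finset.univ.image ⇑g = A ∪ T.image σ := by
      rw [hgcoe, image_split Fg, h0, h1]
      have h2 : Finset.univ.image (fun v => σ (h v)) = A.image σ := by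
        rw [hA, Finset.image_image]
        rfl
      have h5 : A.image σ = S ∪ T.image σ := by
        conv_lhs => rw [(Finset.union_sdiff_of_subset hSA).symm]
        rw [Finset.image_union]
        congr 1
        rw [Finset.image_congr (g := id) (fun x hx => hσS x hx), Finset.image_id]
      rw [h2, h5, ← Finset.union_assoc, Finset.union_eq_left.mpr hSA]
    have hdisj : Disjoint A (T.image σ) := by
      rw [Finset.disjoint_right]
      intro x hx
      simp only [Finset.mem_image] at hx
      obtain ⟨y, hy, rfl⟩ := hx
      exact Finset.mem_compl.mp (hσT y hy)
    have hinjT : Set.InjOn σ ↑T := by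
      intro x hx y hy hxy
      have hxA : x ∈ A := (Finset.sdiff_subset) (by exact_mod_cast hx)
      have hyA : y ∈ A := (Finset.sdiff_subset) (by exact_mod_cast hy)
      exact hinj x hxA y hyA hxy
    rw [himg, Finset.card_union_of_disjoint hdisj, Finset.card_image_of_injOn hinjT]
    omega


open scoped Classical in
lemma oddVerts_empty_of_even {W : Type} [Fintype W] {G : SimpleGraph W} {n : ℕ}
    {f : G →g (⊤ : SimpleGraph (Fin n))} (hev : IsEvenHom f) : oddVerts f = ∅ := by
  rw [oddVerts_eq_sodd, Finset.eq_empty_iff_forall_notMem]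
  intro v hv
  obtain ⟨e, he, hodd, -⟩ := mem_sodd.mp hv
  simp only [SimpleGraph.mem_edgeFinset] at he
  unfold IsEvenHom at hev
  unfold ecnt at hodd
  refine (Nat.not_odd_iff_even.mpr (hev e ?_)) hodd
  simpa using he

lemma exists_base_hom (G : SimpleGraph V) {n : ℕ} (hVn : Fintype.card V ≤ n) :
    Nonempty (G →g (⊤ : SimpleGraph (Fin n))) := by
  refine ⟨⟨fun v => Fin.castLE hVn ((Fintype.equivFin V) v), ?_⟩⟩
  intro a b hab
  rw [SimpleGraph.top_adj]
  intro heq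
  exact G.ne_of_adj hab ((Fintype.equivFin V).injective (Fin.castLE_injective hVn heq))

end Aux

/-- `p(G²) = r̄(G²)` for the disjoint union `G²` of two copies of `G`, for all sufficiently
large target complete graphs `K_n` (say `n ≥ 4|V(G)|`). -/
theorem pval_copies_two {V : Type} [Fintype V] (G : SimpleGraph V) :
    ∀ n : ℕ, 4 * Fintype.card V ≤ n →
      pval (copies G 2) n = rbar (copies G 2) n := by
  classical
  intro n hn
  have hVn : Fintype.card V ≤ n := by omega
  have h2n : 2 * Fintype.card V ≤ n := by omega
  obtain ⟨h0⟩ := exists_base_hom G hVn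
  obtain ⟨g0, hg0even, -⟩ := construct G h2n h0
  have hSp_ne : {x : ℝ | ∃ f : (copies G 2) →g (⊤ : SimpleGraph (Fin n)), IsEvenHom f ∧
      (Fintype.card (Fin 2 × V) : ℝ) - ((Finset.univ.image ⇑f).card : ℝ) = x}.Nonempty :=
    ⟨_, g0, hg0even, rfl⟩
  have hSr_ne : {x : ℝ | ∃ f : (copies G 2) →g (⊤ : SimpleGraph (Fin n)), rval f = x}.Nonempty :=
    ⟨_, g0, rfl⟩
  have hcard_le : ∀ f : (copies G 2) →g (⊤ : SimpleGraph (Fin n)),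
      ((Finset.univ.image ⇑f).card : ℝ) ≤ (Fintype.card (Fin 2 × V) : ℝ) := by
    intro f
    have h1 : (Finset.univ.image ⇑f).card ≤ Fintype.card (Fin 2 × V) := by
      calc (Finset.univ.image ⇑f).card ≤ (Finset.univ : Finset (Fin 2 × V)).card :=
        Finset.card_image_le
      _ = Fintype.card (Fin 2 × V) := Finset.card_univ
    exact_mod_cast h1
  have hSp_bdd : BddBelow {x : ℝ | ∃ f : (copies G 2) →g (⊤ : SimpleGraph (Fin n)), IsEvenHom f ∧
      (Fintype.card (Fin 2 × V) : ℝ) - ((Finset.univ.image ⇑f).card : ℝ) = x} := by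
    refine ⟨0, ?_⟩
    rintro x ⟨f, -, rfl⟩
    have := hcard_le f
    linarith
  have hSr_bdd : BddBelow {x : ℝ | ∃ f : (copies G 2) →g (⊤ : SimpleGraph (Fin n)), rval f = x} := by
    refine ⟨0, ?_⟩
    rintro x ⟨f, rfl⟩
    unfold rval
    have := hcard_le f
    have h2 : (0 : ℝ) ≤ ((oddVerts f).card : ℝ) := by positivity
    linarith
  unfold pval rbar
  apply le_antisymm
  · -- pval ≤ rbar
    apply le_csInf hSr_ne
    rintro x ⟨f, rfl⟩
    -- construct a good even hom out of f
    have hineq := main_ineq G f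
    have hco0 : ⇑(restrHom G f 0) = fun v => f (0, v) := rfl
    have hco1 : ⇑(restrHom G f 1) = fun v => f (1, v) := rfl
    have hk : (oddVerts f).card = (oddVerts f).card := rfl
    rcases le_total (2 * (Finset.univ.image (fun v => f (1, v))).card
        + (sodd G (fun v => f (0, v))).card)
        (2 * (Finset.univ.image (fun v => f (0, v))).card
        + (sodd G (fun v => f (1, v))).card) with hcase | hcase
    · obtain ⟨g, hgeven, hgcard⟩ := construct G h2n (restrHom G f 0)
      rw [hco0] at hgcard
      have hmain : 2 * (Finset.univ.image ⇑f).card ≤ 2 * (Finset.univ.image ⇑g).card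
          + (oddVerts f).card := by omega
      have hmem : ((Fintype.card (Fin 2 × V) : ℝ) - ((Finset.univ.image ⇑g).card : ℝ)) ∈
          {x : ℝ | ∃ f : (copies G 2) →g (⊤ : SimpleGraph (Fin n)), IsEvenHom f ∧
            (Fintype.card (Fin 2 × V) : ℝ) - ((Finset.univ.image ⇑f).card : ℝ) = x} :=
        ⟨g, hgeven, rfl⟩
      refine le_trans (csInf_le hSp_bdd hmem) ?_
      unfold rval
      have hc : (2 * (Finset.univ.image ⇑f).card : ℝ) ≤ (2 * (Finset.univ.image ⇑g).card
          + (oddVerts f).card : ℝ) := by exact_mod_cast hmain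
      push_cast at hc ⊢
      linarith
    · obtain ⟨g, hgeven, hgcard⟩ := construct G h2n (restrHom G f 1)
      rw [hco1] at hgcard
      have hmain : 2 * (Finset.univ.image ⇑f).card ≤ 2 * (Finset.univ.image ⇑g).card
          + (oddVerts f).card := by omega
      have hmem : ((Fintype.card (Fin 2 × V) : ℝ) - ((Finset.univ.image ⇑g).card : ℝ)) ∈
          {x : ℝ | ∃ f : (copies G 2) →g (⊤ : SimpleGraph (Fin n)), IsEvenHom f ∧
            (Fintype.card (Fin 2 × V) : ℝ) - ((Finset.univ.image ⇑f).card : ℝ) = x} :=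
        ⟨g, hgeven, rfl⟩
      refine le_trans (csInf_le hSp_bdd hmem) ?_
      unfold rval
      have hc : (2 * (Finset.univ.image ⇑f).card : ℝ) ≤ (2 * (Finset.univ.image ⇑g).card
          + (oddVerts f).card : ℝ) := by exact_mod_cast hmain
      push_cast at hc ⊢
      linarith
  · -- rbar ≤ pval
    apply csInf_le_csInf hSr_bdd hSp_ne
    rintro x ⟨f, hev, rfl⟩
    refine ⟨f, ?_⟩
    unfold rval
    rw [oddVerts_empty_of_even hev]
    simp
end
end
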